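/- Let Z ⊆ (Fin m → ℝ) × (Fin k → ℝ) be a set such that for each i ∈ Fin k there exist N_i ∈ ℕ and polynomials a_{i,0}, …, a_{i,N_i} ∈ MvPolynomial (Fin m) ℝ with (z i)^(N_i + 1) + ∑_{j=0}^{N_i} (MvPolynomial.eval y (a_{i,j})) * (z i)^j = 0 for every (y, z) ∈ Z. Then there exists a polynomial q ∈ MvPolynomial (Fin m) ℝ such that for every (y, z) ∈ Z one has max (⨆ i, |z i|) 1 ≤ MvPolynomial.eval y q. (The paper's Lemma lem:ex_poly: if the fiber coordinates of a set with finite projection are integral over the polynomial ring of the base, then they are polynomially bounded in terms of the base point.) -/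
import Mathlib

/-- Auxiliary root bound: a monic root is bounded by `max 1 (sum of |coeffs|)`. -/
lemma aux_root_bound (N : ℕ) (x : ℝ) (c : ℕ → ℝ)
    (h : x ^ (N + 1) + ∑ j ∈ Finset.range (N + 1), c j * x ^ j = 0) :
    |x| ≤ max 1 (∑ j ∈ Finset.range (N + 1), |c j|) := by
  by_cases h1 : |x| ≤ 1
  · exact h1.trans (le_max_left _ _)
  push_neg at h1
  refine le_max_of_le_right ?_
  have hx : x ^ (N + 1) = -∑ j ∈ Finset.range (N + 1), c j * x ^ j := by linarith
  have hxN : (0:ℝ) < |x| ^ N := pow_pos (by linarith) N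
  have key : |x| ^ (N + 1) ≤ (∑ j ∈ Finset.range (N + 1), |c j|) * |x| ^ N := by
    calc |x| ^ (N + 1) = |∑ j ∈ Finset.range (N + 1), c j * x ^ j| := by
          rw [← abs_pow, hx, abs_neg]
      _ ≤ ∑ j ∈ Finset.range (N + 1), |c j * x ^ j| := Finset.abs_sum_le_sum_abs _ _
      _ ≤ ∑ j ∈ Finset.range (N + 1), |c j| * |x| ^ N := by
          refine Finset.sum_le_sum fun j hj => ?_
          rw [abs_mul, abs_pow]
          refine mul_le_mul_of_nonneg_left ?_ (abs_nonneg _)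
          exact pow_le_pow_right₀ (by linarith) (Nat.lt_succ_iff.mp (Finset.mem_range.mp hj))
      _ = (∑ j ∈ Finset.range (N + 1), |c j|) * |x| ^ N := by rw [Finset.sum_mul]
  have : |x| * |x| ^ N ≤ (∑ j ∈ Finset.range (N + 1), |c j|) * |x| ^ N := by
    rw [← pow_succ']; exact key
  exact le_of_mul_le_mul_right this hxN

/-- Lemma lem:ex_poly: if each fiber coordinate of a set `Z` with finite projection is
integral over the polynomial ring of the base, then the fiber coordinates are polynomially
bounded in terms of the base point. -/
theorem stmt_8 (m k : ℕ) (Z : Set ((Fin m → ℝ) × (Fin k → ℝ)))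
    (hZ : ∀ i : Fin k, ∃ (N : ℕ) (a : ℕ → MvPolynomial (Fin m) ℝ),
      ∀ yz ∈ Z, yz.2 i ^ (N + 1) +
        ∑ j ∈ Finset.range (N + 1),
          MvPolynomial.eval yz.1 (a j) * yz.2 i ^ j = 0) :
    ∃ q : MvPolynomial (Fin m) ℝ,
      ∀ yz ∈ Z, max (⨆ i, |yz.2 i|) 1 ≤ MvPolynomial.eval yz.1 q := by
  choose N a ha using hZ
  refine ⟨1 + ∑ i : Fin k, ∑ j ∈ Finset.range (N i + 1), ((a i j) ^ 2 + 1), ?_⟩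
  intro yz hyz
  set e : Fin k → ℕ → ℝ := fun i j => MvPolynomial.eval yz.1 (a i j) with he
  have hevq : MvPolynomial.eval yz.1
      (1 + ∑ i : Fin k, ∑ j ∈ Finset.range (N i + 1), ((a i j) ^ 2 + 1)) =
      1 + ∑ i : Fin k, ∑ j ∈ Finset.range (N i + 1), ((e i j) ^ 2 + 1) := by
    simp [he, map_sum]
  rw [hevq]
  have hterm : ∀ i, (0:ℝ) ≤ ∑ j ∈ Finset.range (N i + 1), ((e i j) ^ 2 + 1) :=
    fun i => Finset.sum_nonneg fun j _ => by positivity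
  have hge1 : (1:ℝ) ≤ 1 + ∑ i : Fin k, ∑ j ∈ Finset.range (N i + 1), ((e i j) ^ 2 + 1) := by
    have := Finset.sum_nonneg (fun i (_ : i ∈ Finset.univ) => hterm i)
    linarith
  refine max_le ?_ hge1
  refine Real.iSup_le (fun i => ?_) (by linarith)
  have hbound := aux_root_bound (N i) (yz.2 i) (e i) (ha i yz hyz)
  refine hbound.trans (max_le ?_ ?_)
  · exact hge1
  · have h1 : ∑ j ∈ Finset.range (N i + 1), |e i j| ≤
        ∑ j ∈ Finset.range (N i + 1), ((e i j) ^ 2 + 1) := by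
      refine Finset.sum_le_sum fun j _ => ?_
      nlinarith [sq_nonneg (|e i j| - 1), sq_abs (e i j)]
    have h2 : ∑ j ∈ Finset.range (N i + 1), ((e i j) ^ 2 + 1) ≤
        ∑ i' : Fin k, ∑ j ∈ Finset.range (N i' + 1), ((e i' j) ^ 2 + 1) :=
      Finset.single_le_sum (fun i' _ => hterm i') (Finset.mem_univ i)
    linarith
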